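/- The set { (m, n) ∈ ℕ² : m > 0 ∧ n > 0 ∧ gcd(m, n) = 1 } is not a semilinear subset of ℕ². -/

import Mathlib

def IsLinear2 (S : Set (ℕ × ℕ)) : Prop :=
  ∃ (base : ℕ × ℕ) (ps : List (ℕ × ℕ)),
    S = { x | ∃ c : Fin ps.length → ℕ, x = base + ∑ i, c i • ps.get i }

def IsSemilinear2 (S : Set (ℕ × ℕ)) : Prop :=
  ∃ (n : ℕ) (L : Fin n → Set (ℕ × ℕ)), (∀ i, IsLinear2 (L i)) ∧ S = ⋃ i, L i

/-- Pumping: adding any multiple of any period keeps us in a linear set. -/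
lemma pump2 (base : ℕ × ℕ) (ps : List (ℕ × ℕ)) (x : ℕ × ℕ)
    (hx : ∃ c : Fin ps.length → ℕ, x = base + ∑ i, c i • ps.get i)
    (j : Fin ps.length) (t : ℕ) :
    ∃ c : Fin ps.length → ℕ, x + t • ps.get j = base + ∑ i, c i • ps.get i := by
  obtain ⟨c, rfl⟩ := hx
  refine ⟨fun i => c i + if i = j then t else 0, ?_⟩
  have h : ∀ i : Fin ps.length,
      (c i + if i = j then t else 0) • ps.get i
        = c i • ps.get i + (if i = j then t • ps.get i else 0) := by
    intro i
    split
    · rw [add_smul]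
    · simp
  rw [add_assoc]
  congr 1
  simp only [h, Finset.sum_add_distrib, Finset.sum_ite_eq' Finset.univ j, Finset.mem_univ,
    if_true]

/-- Iterated CRT construction of `M` defeating all period directions. -/
lemma crt_key (B Q : ℕ) (hQ : Q.Prime) (l : List (ℕ × ℕ)) :
    ∃ M W : ℕ, 0 < W ∧ M ≡ 1 [MOD Q] ∧ Q ∣ W ∧
      ∀ p ∈ l, 0 < p.1 → p.1 ≤ B →
        ∃ r : ℕ, r.Prime ∧ B < r ∧ r ∣ W ∧
          (r : ℤ) ∣ ((p.1 : ℤ) * M - (p.2 : ℤ) * Q) := by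
  induction l with
  | nil => exact ⟨1, Q, hQ.pos, Nat.ModEq.refl 1, dvd_refl Q, by simp⟩
  | cons p l ih =>
    obtain ⟨M, W, hWpos, hMQ, hQW, hl⟩ := ih
    by_cases hp : 0 < p.1 ∧ p.1 ≤ B
    · obtain ⟨r, hrge, hr⟩ := Nat.exists_infinite_primes (max B W + 1)
      haveI : Fact r.Prime := ⟨hr⟩
      have hBr : B < r := lt_of_le_of_lt (le_max_left B W) hrge
      have hWr : W < r := lt_of_le_of_lt (le_max_right B W) hrge
      have hu0 : ((p.1 : ℕ) : ZMod r) ≠ 0 := by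
        rw [Ne, ZMod.natCast_eq_zero_iff]
        intro hdvd
        have := Nat.le_of_dvd hp.1 hdvd
        omega
      have hW0 : ((W : ℕ) : ZMod r) ≠ 0 := by
        rw [Ne, ZMod.natCast_eq_zero_iff]
        intro hdvd
        have := Nat.le_of_dvd hWpos hdvd
        omega
      set z : ZMod r :=
        ((p.2 : ZMod r) * Q - (p.1 : ZMod r) * M) * (((p.1 : ℕ) : ZMod r) * (W : ZMod r))⁻¹
        with hzdef
      set k : ℕ := z.val with hk
      have hkz : ((k : ℕ) : ZMod r) = z := ZMod.natCast_zmod_val z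
      have hmain : z * ((p.1 : ZMod r) * W) = (p.2 : ZMod r) * Q - (p.1 : ZMod r) * M := by
        rw [hzdef]
        exact inv_mul_cancel_right₀ (mul_ne_zero hu0 hW0) _
      refine ⟨M + k * W, W * r, Nat.mul_pos hWpos hr.pos, ?_, hQW.mul_right r, ?_⟩
      · have h1 : M + k * W ≡ M [MOD Q] :=
          ((Nat.modEq_iff_dvd' (Nat.le_add_right _ _)).mpr
            (by simpa using (hQW.mul_left k))).symm
        exact h1.trans hMQ
      · intro q hq hq1 hq2
        rcases List.mem_cons.mp hq with rfl | hq'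
        · refine ⟨r, hr, hBr, dvd_mul_left r W, ?_⟩
          rw [← ZMod.intCast_zmod_eq_zero_iff_dvd]
          push_cast
          rw [hkz]
          linear_combination hmain
        · obtain ⟨s, hs, hBs, hsW, hsdvd⟩ := hl q hq' hq1 hq2
          refine ⟨s, hs, hBs, hsW.mul_right r, ?_⟩
          have h2 : (s : ℤ) ∣ (q.1 : ℤ) * (k * W) :=
            Dvd.dvd.mul_left ((Int.natCast_dvd_natCast.mpr hsW).mul_left k) q.1
          have h3 := dvd_add hsdvd h2
          convert h3 using 1
          · rfl
          push_cast
          ring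
    · refine ⟨M, W, hWpos, hMQ, hQW, ?_⟩
      intro q hq hq1 hq2
      rcases List.mem_cons.mp hq with rfl | hq'
      · exact absurd ⟨hq1, hq2⟩ hp
      · exact hl q hq' hq1 hq2

theorem stmt_6 :
    ¬ IsSemilinear2 { p : ℕ × ℕ | 0 < p.1 ∧ 0 < p.2 ∧ Nat.gcd p.1 p.2 = 1 } := by
  rintro ⟨n, L, hlin, hS⟩
  choose b ps hL using hlin
  set B : ℕ := ∑ i, ((b i).1 + ((ps i).map (fun p => p.1 + p.2)).sum) with hB
  have hbB : ∀ i, (b i).1 ≤ B := by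
    intro i
    calc (b i).1 ≤ (b i).1 + ((ps i).map (fun p => p.1 + p.2)).sum := Nat.le_add_right _ _
    _ ≤ B := Finset.single_le_sum
        (f := fun i => (b i).1 + ((ps i).map (fun p => p.1 + p.2)).sum)
        (fun _ _ => Nat.zero_le _) (Finset.mem_univ i)
  have hpB : ∀ i, ∀ p ∈ ps i, p.1 ≤ B ∧ p.2 ≤ B := by
    intro i p hp
    have h1 : p.1 + p.2 ≤ ((ps i).map (fun p => p.1 + p.2)).sum :=
      List.single_le_sum (fun _ _ => Nat.zero_le _) _ (List.mem_map_of_mem hp)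
    have h2 : (b i).1 + ((ps i).map (fun p => p.1 + p.2)).sum ≤ B :=
      Finset.single_le_sum
        (f := fun i => (b i).1 + ((ps i).map (fun p => p.1 + p.2)).sum)
        (fun _ _ => Nat.zero_le _) (Finset.mem_univ i)
    omega
  obtain ⟨Q, hQB, hQ⟩ := Nat.exists_infinite_primes (B + 1)
  have hQ2 := hQ.two_le
  set l : List (ℕ × ℕ) := (List.finRange n).flatMap ps with hldef
  obtain ⟨M, W, hWpos, hMQ, hQW, hkey⟩ := crt_key B Q hQ l
  have hM1 : M % Q = 1 := by
    have h := hMQ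
    unfold Nat.ModEq at h
    rwa [Nat.mod_eq_of_lt (show (1:ℕ) < Q by omega)] at h
  have hM0 : 0 < M := by
    rcases Nat.eq_zero_or_pos M with h | h
    · rw [h] at hM1; simp at hM1
    · exact h
  have hQM : Nat.gcd Q M = 1 := by
    refine (Nat.Prime.coprime_iff_not_dvd hQ).mpr ?_
    intro hd
    obtain ⟨c, rfl⟩ := hd
    simp [Nat.mul_mod_right] at hM1
  have hxS : (Q, M) ∈ { p : ℕ × ℕ | 0 < p.1 ∧ 0 < p.2 ∧ Nat.gcd p.1 p.2 = 1 } :=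
    ⟨by omega, hM0, hQM⟩
  rw [hS] at hxS
  obtain ⟨i, hxi⟩ := Set.mem_iUnion.mp hxS
  rw [hL i] at hxi
  simp only [Set.mem_setOf_eq] at hxi
  have hpumpS : ∀ (j : Fin (ps i).length) (t : ℕ),
      Nat.gcd (Q + t * ((ps i).get j).1) (M + t * ((ps i).get j).2) = 1 := by
    intro j t
    have hmem := pump2 (b i) (ps i) (Q, M) hxi j t
    have hmem' : (Q, M) + t • (ps i).get j ∈ L i := by
      rw [hL i]; exact hmem
    have hmem2 : (Q, M) + t • (ps i).get j ∈
        { p : ℕ × ℕ | 0 < p.1 ∧ 0 < p.2 ∧ Nat.gcd p.1 p.2 = 1 } := by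
      rw [hS]; exact Set.mem_iUnion.mpr ⟨i, hmem'⟩
    have h3 := hmem2.2.2
    simpa [smul_eq_mul] using h3
  by_cases hzero : ∀ j : Fin (ps i).length, (ps i).get j = 0
  · obtain ⟨c, hc⟩ := hxi
    have hs0 : ∑ x : Fin (ps i).length, c x • (ps i).get x = 0 :=
      Finset.sum_eq_zero (fun x _ => by rw [hzero x, smul_zero])
    have hc2 : (Q, M) = b i := by rw [hs0, add_zero] at hc; exact hc
    have hc3 := congrArg Prod.fst hc2
    simp at hc3
    have := hbB i
    omega
  · push_neg at hzero
    obtain ⟨j, hj⟩ := hzero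
    set p := (ps i).get j with hpdef
    have hpmem : p ∈ ps i := (ps i).get_mem _
    have hpB' := hpB i p hpmem
    rcases Nat.eq_zero_or_pos p.1 with hu | hu
    · -- first coordinate of the period is zero; second must be positive
      have hv : 0 < p.2 := by
        rcases Nat.eq_zero_or_pos p.2 with h | h
        · exact absurd (Prod.ext_iff.mpr ⟨by simpa using hu, by simpa using h⟩) hj
        · exact h
      haveI : Fact Q.Prime := ⟨hQ⟩
      have hv0 : ((p.2 : ℕ) : ZMod Q) ≠ 0 := by
        rw [Ne, ZMod.natCast_eq_zero_iff]
        intro hd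
        have := Nat.le_of_dvd hv hd
        omega
      set t : ℕ := ((-(M : ZMod Q)) * ((p.2 : ZMod Q))⁻¹).val with ht
      have htz : ((t : ℕ) : ZMod Q) = (-(M : ZMod Q)) * ((p.2 : ZMod Q))⁻¹ :=
        ZMod.natCast_zmod_val _
      have h2 : Q ∣ M + t * p.2 := by
        rw [← ZMod.natCast_eq_zero_iff]
        push_cast
        rw [htz]
        field_simp
        ring
      have h1 : Q ∣ Q + t * p.1 := by
        rw [hu]
        simp
      have hg := hpumpS j t
      have hdvd1 := Nat.dvd_gcd h1 h2
      rw [← hpdef] at hg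
      rw [hg] at hdvd1
      have := Nat.le_of_dvd one_pos hdvd1
      omega
    · -- first coordinate positive: use the CRT prime
      have hmem_l : p ∈ l := List.mem_flatMap.mpr ⟨i, List.mem_finRange i, hpmem⟩
      obtain ⟨r, hr, hBr, hrW, hrdvd⟩ := hkey p hmem_l hu hpB'.1
      haveI : Fact r.Prime := ⟨hr⟩
      have hu0 : ((p.1 : ℕ) : ZMod r) ≠ 0 := by
        rw [Ne, ZMod.natCast_eq_zero_iff]
        intro hd
        have := Nat.le_of_dvd hu hd
        omega
      set t : ℕ := ((-(Q : ZMod r)) * ((p.1 : ZMod r))⁻¹).val with ht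
      have htz : ((t : ℕ) : ZMod r) = (-(Q : ZMod r)) * ((p.1 : ZMod r))⁻¹ :=
        ZMod.natCast_zmod_val _
      have h1 : r ∣ Q + t * p.1 := by
        rw [← ZMod.natCast_eq_zero_iff]
        push_cast
        rw [htz]
        field_simp
        ring
      have hDz : ((p.1 : ZMod r)) * M - ((p.2 : ZMod r)) * Q = 0 := by
        have h := (ZMod.intCast_zmod_eq_zero_iff_dvd _ r).mpr hrdvd
        push_cast at h
        exact h
      have h2 : r ∣ M + t * p.2 := by
        rw [← ZMod.natCast_eq_zero_iff]
        have hmul : (p.1 : ZMod r) * ((M : ZMod r) + (t : ZMod r) * (p.2 : ZMod r)) = 0 := by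
          rw [htz]
          have hinv : ((p.1 : ZMod r))⁻¹ * (p.1 : ZMod r) = 1 := inv_mul_cancel₀ hu0
          calc (p.1 : ZMod r) * ((M : ZMod r) + -(Q : ZMod r) * ((p.1 : ZMod r))⁻¹ * (p.2 : ZMod r))
              = (p.1 : ZMod r) * M - ((p.1 : ZMod r))⁻¹ * (p.1 : ZMod r) * ((p.2 : ZMod r) * Q) := by
                ring
            _ = (p.1 : ZMod r) * M - (p.2 : ZMod r) * Q := by rw [hinv]; ring
            _ = 0 := hDz
        have hz2 := (mul_eq_zero.mp hmul).resolve_left hu0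
        push_cast
        exact hz2
      have hg := hpumpS j t
      have hdvd1 := Nat.dvd_gcd h1 h2
      rw [← hpdef] at hg
      rw [hg] at hdvd1
      have := Nat.le_of_dvd one_pos hdvd1
      have := hr.two_le
      omega
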